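/- Let H_0 be a bounded self-adjoint operator on a Hilbert space, φ a unit vector, h > 0, H = H_0 + h(φ,·)φ, and q_λ = (λI − H_0)^{-1}φ for λ in the resolvent set of H_0. If λ is real, lies in the resolvent set of H_0, and satisfies h(φ, q_λ) = 1, then λ is an eigenvalue of H with eigenvector q_λ. -/
import Mathlib


open scoped RealInnerProductSpace

/-- Rank-one perturbation: if `λ` is real, lies in the resolvent set of `H₀`, and
satisfies `h(φ, q_λ) = 1` where `q_λ = (λI − H₀)⁻¹φ`, then `λ` is an eigenvalue of
`H = H₀ + h(φ,·)φ` with eigenvector `q_λ`. -/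
theorem stmt_4 {E : Type*} [NormedAddCommGroup E] [InnerProductSpace ℝ E]
    [CompleteSpace E] (H0 : E →L[ℝ] E) (hH0 : IsSelfAdjoint H0)
    (φ : E) (hφ : ‖φ‖ = 1) (h : ℝ) (hh : 0 < h)
    (H : E →L[ℝ] E) (hH : H = H0 + h • ((innerSL ℝ φ).smulRight φ))
    (lam : ℝ) (hres0 : lam ∈ resolventSet ℝ H0)
    (q : E) (hq : q = Ring.inverse (algebraMap ℝ (E →L[ℝ] E) lam - H0) φ)
    (hroot : h * ⟪φ, q⟫ = 1) :
    q ≠ 0 ∧ H q = lam • q := by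
  have hunit : IsUnit (algebraMap ℝ (E →L[ℝ] E) lam - H0) := hres0
  have hne : q ≠ 0 := by
    intro h0
    rw [h0, inner_zero_right, mul_zero] at hroot
    exact one_ne_zero hroot.symm
  refine ⟨hne, ?_⟩
  have key : (algebraMap ℝ (E →L[ℝ] E) lam - H0) q = φ := by
    rw [hq, ← ContinuousLinearMap.comp_apply, ← ContinuousLinearMap.mul_def,
      Ring.mul_inverse_cancel _ hunit, ContinuousLinearMap.one_apply]
  have key' : lam • q - H0 q = φ := by
    simpa [Algebra.algebraMap_eq_smul_one] using key
  rw [hH]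
  simp only [ContinuousLinearMap.add_apply, ContinuousLinearMap.smul_apply,
    ContinuousLinearMap.smulRight_apply, innerSL_apply_apply, smul_smul, hroot, one_smul]
  rw [← key']; abel
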